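/- Let V be a DVR with p in its maximal ideal, R = V[[x, y]], and I = (x² + y² + p², px, py) ⊆ R. Then p³ ∈ m_R·I but p² ∉ I. -/

import Mathlib

open MvPowerSeries

/-- Let `V` be a DVR with `0 ≠ p` in its maximal ideal, `R = V[[x, y]]`,
and `I = (x² + y² + p², px, py) ⊆ R`.  Then `p³ ∈ m_R · I` but `p² ∉ I`. -/
theorem stmt13 (V : Type) [CommRing V] [IsDomain V] [IsDiscreteValuationRing V]
    (p : V) (hp : p ≠ 0) (hpm : p ∈ IsLocalRing.maximalIdeal V) :
    (C (σ := Fin 2) (R := V) p) ^ 3 ∈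
      (IsLocalRing.maximalIdeal (MvPowerSeries (Fin 2) V)) *
        (Ideal.span {(X 0) ^ 2 + (X 1) ^ 2 + (C (σ := Fin 2) (R := V) p) ^ 2,
          (C (σ := Fin 2) (R := V) p) * X 0, (C (σ := Fin 2) (R := V) p) * X 1}) ∧
    (C (σ := Fin 2) (R := V) p) ^ 2 ∉
      (Ideal.span {(X 0) ^ 2 + (X 1) ^ 2 + (C (σ := Fin 2) (R := V) p) ^ 2,
        (C (σ := Fin 2) (R := V) p) * X 0, (C (σ := Fin 2) (R := V) p) * X 1} :
          Ideal (MvPowerSeries (Fin 2) V)) := by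
  classical
  set f : MvPowerSeries (Fin 2) V := (X 0) ^ 2 + (X 1) ^ 2 + (C (σ := Fin 2) (R := V) p) ^ 2 with hfd
  set g : MvPowerSeries (Fin 2) V := (C (σ := Fin 2) (R := V) p) * X 0 with hgd
  set h : MvPowerSeries (Fin 2) V := (C (σ := Fin 2) (R := V) p) * X 1 with hhd
  have hC : C (σ := Fin 2) (R := V) p ∈ IsLocalRing.maximalIdeal (MvPowerSeries (Fin 2) V) := by
    intro hu
    have := isUnit_constantCoeff _ hu
    rw [constantCoeff_C] at this
    exact hpm this
  have hX : ∀ i : Fin 2, (X i : MvPowerSeries (Fin 2) V) ∈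
      IsLocalRing.maximalIdeal (MvPowerSeries (Fin 2) V) := by
    intro i hu
    have := isUnit_constantCoeff _ hu
    rw [constantCoeff_X] at this
    exact not_isUnit_zero this
  constructor
  · have hfI : f ∈ Ideal.span {f, g, h} := Ideal.subset_span (by simp)
    have hgI : g ∈ Ideal.span {f, g, h} := Ideal.subset_span (by simp)
    have hhI : h ∈ Ideal.span {f, g, h} := Ideal.subset_span (by simp)
    have key : (C (σ := Fin 2) (R := V) p) ^ 3 = C (σ := Fin 2) (R := V) p * f - X 0 * g - X 1 * h := by
      rw [hfd, hgd, hhd]; ring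
    rw [key]
    exact sub_mem (sub_mem (Ideal.mul_mem_mul hC hfI) (Ideal.mul_mem_mul (hX 0) hgI))
      (Ideal.mul_mem_mul (hX 1) hhI)
  · intro hmem
    rw [show ({f, g, h} : Set (MvPowerSeries (Fin 2) V)) = insert f (insert g {h}) from rfl,
      Ideal.mem_span_insert] at hmem
    obtain ⟨a, z1, hz1, heq1⟩ := hmem
    rw [Ideal.mem_span_insert] at hz1
    obtain ⟨b, z2, hz2, heq2⟩ := hz1
    rw [Ideal.mem_span_singleton] at hz2
    obtain ⟨c, hc⟩ := hz2
    have E : (C (σ := Fin 2) (R := V) p) ^ 2 = a * f + (b * g + h * c) := by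
      rw [heq1, heq2, hc]
    -- constant coefficient: a₀ = 1
    have E0 := congrArg (constantCoeff (σ := Fin 2) (R := V)) E
    simp only [map_add, map_mul, map_pow, constantCoeff_C, hfd, hgd, hhd,
      constantCoeff_X, mul_zero, zero_mul, add_zero, zero_add] at E0
    have ha0 : constantCoeff (σ := Fin 2) (R := V) a = 1 := by
      have h2 : (1 - constantCoeff (σ := Fin 2) (R := V) a) * p ^ 2 = 0 := by linear_combination E0
      rcases mul_eq_zero.mp h2 with h3 | h3
      · exact (sub_eq_zero.mp h3).symm
      · exact absurd h3 (pow_ne_zero _ hp)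
    -- coefficient at x²
    set n : Fin 2 →₀ ℕ := Finsupp.single 0 2 with hn
    have En := congrArg (coeff (R := V) n) E
    have hn0 : n ≠ 0 := by
      simp [hn, Finsupp.single_eq_zero]
    have c0 : coeff (R := V) n ((C (σ := Fin 2) (R := V) p) ^ 2) = 0 := by
      rw [← map_pow, coeff_C, if_neg hn0]
    have c1 : coeff (R := V) n (a * X 0 ^ 2) = constantCoeff (σ := Fin 2) (R := V) a := by
      rw [X_pow_eq, coeff_mul_monomial, if_pos le_rfl, mul_one, hn, tsub_self,
        coeff_zero_eq_constantCoeff]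
    have c2 : coeff (R := V) n (a * X 1 ^ 2) = 0 := by
      rw [X_pow_eq, coeff_mul_monomial, if_neg]
      rw [Finsupp.single_le_iff, hn]
      simp
    have c3 : coeff (R := V) n (a * (C (σ := Fin 2) (R := V) p) ^ 2) = coeff (R := V) n a * p ^ 2 := by
      rw [← map_pow, coeff_mul_C]
    have c4 : coeff (R := V) n (b * g) = coeff (R := V) n (b * X 0) * p := by
      rw [show b * g = (b * X 0) * C (σ := Fin 2) (R := V) p by rw [hgd]; ring, coeff_mul_C]
    have c5 : coeff (R := V) n (h * c) = coeff (R := V) n (c * X 1) * p := by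
      rw [show h * c = (c * X 1) * C (σ := Fin 2) (R := V) p by rw [hhd]; ring, coeff_mul_C]
    rw [hfd, mul_add, mul_add] at En
    simp only [map_add] at En
    rw [c0, c1, c2, c3, c4, c5, ha0] at En
    have hu : IsUnit p := by
      refine IsUnit.of_mul_eq_one (a := p) (-(coeff (R := V) n a * p + coeff (R := V) n (b * X 0) + coeff (R := V) n (c * X 1))) ?_
      linear_combination En
    exact hpm hu
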